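/- arXiv:2004.03881 — 4 statements merged into one kernel-verified Lean document; each statement's English description precedes it below -/
import Mathlib

section
/- Let f : [a,b] → ℝ be C^{k+1} and suppose f(x₀) = 0 for some x₀ ∈ [a,b]. Then for all x ∈ [a,b], the k-th derivative of the function x ↦ f(x)/(x - x₀) (extended appropriately at x₀) equals (1/(x-x₀)^{k+1}) · ∫_{x₀}^{x} (t - x₀)^k f^{(k+1)}(t) dt. -/
open Set intervalIntegral MeasureTheory Filter Topology

private lemma my_ftc {a b : ℝ} (F F' : ℝ → ℝ)
    (hF : ContinuousOn F (Icc a b))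
    (hF' : ∀ y ∈ Ioo a b, HasDerivAt F (F' y) y)
    (hint : ContinuousOn F' (Icc a b))
    {x₀ x : ℝ} (hx₀ : x₀ ∈ Icc a b) (hx : x ∈ Icc a b) :
    ∫ t in x₀..x, F' t = F x - F x₀ := by
  have hii : ∀ {u v : ℝ}, u ∈ Icc a b → v ∈ Icc a b → IntervalIntegrable F' volume u v :=
    fun hu hv => (hint.mono (uIcc_subset_Icc hu hv)).intervalIntegrable
  rcases le_total x₀ x with h | h
  · exact integral_eq_sub_of_hasDerivAt_of_le h
      (hF.mono (Icc_subset_Icc hx₀.1 hx.2))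
      (fun y hy => hF' y ⟨lt_of_le_of_lt hx₀.1 hy.1, lt_of_lt_of_le hy.2 hx.2⟩)
      (hii hx₀ hx)
  · rw [intervalIntegral.integral_symm,
      integral_eq_sub_of_hasDerivAt_of_le h (hF.mono (Icc_subset_Icc hx.1 hx₀.2))
        (fun y hy => hF' y ⟨lt_of_le_of_lt hx.1 hy.1, lt_of_lt_of_le hy.2 hx₀.2⟩)
        (hii hx hx₀)]
    ring

private lemma my_deriv {a b : ℝ} (_hab : a < b) (G : ℝ → ℝ)
    (hG : ContinuousOn G (Icc a b)) {x₀ x : ℝ} (hx₀ : x₀ ∈ Icc a b) (hx : x ∈ Icc a b) :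
    HasDerivWithinAt (fun u => ∫ t in x₀..u, G t) (G x) (Icc a b) x := by
  haveI : Fact (x ∈ Icc a b) := ⟨hx⟩
  exact integral_hasDerivWithinAt_right (s := Icc a b) (t := Icc a b)
    ((hG.mono (uIcc_subset_Icc hx₀ hx)).intervalIntegrable)
    ⟨Icc a b, self_mem_nhdsWithin, hG.aestronglyMeasurable measurableSet_Icc⟩
    (hG.continuousWithinAt hx)

private lemma key (a b x₀ : ℝ) (hab : a < b) (hx₀ : x₀ ∈ Icc a b) (f : ℝ → ℝ) :
    ∀ k : ℕ, ContDiffOn ℝ (k + 1) f (Icc a b) → f x₀ = 0 →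
    ∀ x ∈ Icc a b, x ≠ x₀ →
      iteratedDerivWithin k (fun y => f y / (y - x₀)) (Icc a b) x
        = (∫ t in x₀..x, (t - x₀) ^ k * iteratedDerivWithin (k + 1) f (Icc a b) t)
            / (x - x₀) ^ (k + 1) := by
  have hs : UniqueDiffOn ℝ (Icc a b) := uniqueDiffOn_Icc hab
  intro k
  induction k with
  | zero =>
    intro hf hf0 x hx hxne
    have hFcont : ContinuousOn (iteratedDerivWithin 1 f (Icc a b)) (Icc a b) :=
      hf.continuousOn_iteratedDerivWithin (by norm_num) hs
    have hFd : ∀ y ∈ Ioo a b, HasDerivAt f (iteratedDerivWithin 1 f (Icc a b) y) y := by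
      intro y hy
      have hys : y ∈ Icc a b := Ioo_subset_Icc_self hy
      have hd : DifferentiableWithinAt ℝ f (Icc a b) y :=
        hf.differentiableOn (by norm_num) y hys
      have h2 := hd.hasDerivWithinAt.hasDerivAt (Icc_mem_nhds hy.1 hy.2)
      rwa [iteratedDerivWithin_one]
    have hFTC : ∫ t in x₀..x, iteratedDerivWithin 1 f (Icc a b) t = f x - f x₀ :=
      my_ftc f _ hf.continuousOn hFd hFcont hx₀ hx
    simp only [iteratedDerivWithin_zero, pow_zero, one_mul, pow_one, Nat.zero_add]
    rw [hFTC, hf0, sub_zero]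
  | succ k ih =>
    intro hf hf0 x hx hxne
    have hne : x - x₀ ≠ 0 := sub_ne_zero.mpr hxne
    have hf' : ContDiffOn ℝ (k + 1) f (Icc a b) := hf.of_le (by
      exact_mod_cast Nat.le_succ (k + 1))
    set F := iteratedDerivWithin (k + 1) f (Icc a b) with hFdef
    set F' := iteratedDerivWithin (k + 1 + 1) f (Icc a b) with hF'def
    have hFcont : ContinuousOn F (Icc a b) :=
      hf.continuousOn_iteratedDerivWithin (by exact_mod_cast Nat.le_succ (k + 1)) hs
    have hF'cont : ContinuousOn F' (Icc a b) :=
      hf.continuousOn_iteratedDerivWithin (by exact_mod_cast le_refl (k + 2)) hs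
    have hFdiff : ∀ y ∈ Ioo a b, HasDerivAt F (F' y) y := by
      intro y hy
      have hys : y ∈ Icc a b := Ioo_subset_Icc_self hy
      have hd : DifferentiableWithinAt ℝ F (Icc a b) y :=
        hf.differentiableOn_iteratedDerivWithin (m := k + 1)
          (by exact_mod_cast Nat.lt_succ_self (k + 1)) hs y hys
      have h2 := hd.hasDerivWithinAt.hasDerivAt (Icc_mem_nhds hy.1 hy.2)
      rw [hF'def, iteratedDerivWithin_succ]
      exact h2
    -- integration by parts
    have hpow : ∀ y : ℝ, HasDerivAt (fun y => (y - x₀) ^ (k + 1))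
        ((k + 1 : ℝ) * (y - x₀) ^ k) y := by
      intro y
      simpa [Pi.pow_def] using ((hasDerivAt_id y).sub_const x₀).pow (k + 1)
    have hGcont : ContinuousOn (fun y => (y - x₀) ^ (k + 1) * F y) (Icc a b) :=
      (((continuous_id.sub continuous_const).pow (k + 1)).continuousOn).mul hFcont
    have hGd : ∀ y ∈ Ioo a b, HasDerivAt (fun y => (y - x₀) ^ (k + 1) * F y)
        ((k + 1 : ℝ) * (y - x₀) ^ k * F y + (y - x₀) ^ (k + 1) * F' y) y :=
      fun y hy => (hpow y).mul (hFdiff y hy)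
    have hG'cont : ContinuousOn
        (fun y => (k + 1 : ℝ) * (y - x₀) ^ k * F y + (y - x₀) ^ (k + 1) * F' y) (Icc a b) :=
      (((continuous_const.mul ((continuous_id.sub continuous_const).pow k)).continuousOn).mul
        hFcont).add ((((continuous_id.sub continuous_const).pow (k + 1)).continuousOn).mul hF'cont)
    have hIBP := my_ftc _ _ hGcont hGd hG'cont hx₀ hx
    have hG0 : (x₀ - x₀) ^ (k + 1) * F x₀ = 0 := by simp
    have hI1 : IntervalIntegrable (fun t => (t - x₀) ^ k * F t) volume x₀ x :=
      ((((continuous_id.sub continuous_const).pow k).continuousOn).mul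
        (hFcont.mono (uIcc_subset_Icc hx₀ hx))).intervalIntegrable
    have hI2 : IntervalIntegrable (fun t => (t - x₀) ^ (k + 1) * F' t) volume x₀ x :=
      ((((continuous_id.sub continuous_const).pow (k + 1)).continuousOn).mul
        (hF'cont.mono (uIcc_subset_Icc hx₀ hx))).intervalIntegrable
    have hsplit : (∫ t in x₀..x, ((k + 1 : ℝ) * (t - x₀) ^ k * F t
          + (t - x₀) ^ (k + 1) * F' t))
        = (k + 1 : ℝ) * (∫ t in x₀..x, (t - x₀) ^ k * F t)
          + ∫ t in x₀..x, (t - x₀) ^ (k + 1) * F' t := by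
      rw [← intervalIntegral.integral_const_mul,
        ← intervalIntegral.integral_add (hI1.const_mul _) hI2]
      refine intervalIntegral.integral_congr fun t _ => ?_
      ring
    have hkey : ∫ t in x₀..x, (t - x₀) ^ (k + 1) * F' t
        = (x - x₀) ^ (k + 1) * F x - (k + 1 : ℝ) * ∫ t in x₀..x, (t - x₀) ^ k * F t := by
      rw [hsplit, hG0, sub_zero] at hIBP
      linarith [hIBP]
    -- derivative computation
    have hIk : HasDerivWithinAt (fun u => ∫ t in x₀..u, (t - x₀) ^ k * F t)
        ((x - x₀) ^ k * F x) (Icc a b) x :=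
      my_deriv hab _ ((((continuous_id.sub continuous_const).pow k).continuousOn).mul hFcont)
        hx₀ hx
    have hden : HasDerivWithinAt (fun y => (y - x₀) ^ (k + 1))
        ((k + 1 : ℝ) * (x - x₀) ^ k) (Icc a b) x := (hpow x).hasDerivWithinAt
    have hdiv : HasDerivWithinAt (fun y => (∫ t in x₀..y, (t - x₀) ^ k * F t) / (y - x₀) ^ (k + 1)) _ (Icc a b) x := hIk.div hden (pow_ne_zero (k + 1) hne)
    have heq : iteratedDerivWithin k (fun y => f y / (y - x₀)) (Icc a b)
        =ᶠ[𝓝[Icc a b] x]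
          fun y => (∫ t in x₀..y, (t - x₀) ^ k * F t) / (y - x₀) ^ (k + 1) := by
      filter_upwards [self_mem_nhdsWithin,
        (eventually_ne_nhds hxne).filter_mono nhdsWithin_le_nhds] with y hys hyne
      exact ih hf' hf0 y hys hyne
    rw [iteratedDerivWithin_succ,
      heq.derivWithin_eq (ih hf' hf0 x hx hxne),
      hdiv.derivWithin (hs x hx), hkey]
    field_simp
    ring

theorem stmt_0 (a b x₀ : ℝ) (k : ℕ) (f : ℝ → ℝ)
    (hx₀ : x₀ ∈ Icc a b)
    (hf : ContDiffOn ℝ (k + 1) f (Icc a b))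
    (hf0 : f x₀ = 0) :
    ∀ x ∈ Icc a b, x ≠ x₀ →
      iteratedDerivWithin k (fun y => f y / (y - x₀)) (Icc a b) x
        = (∫ t in x₀..x, (t - x₀) ^ k * iteratedDerivWithin (k + 1) f (Icc a b) t)
            / (x - x₀) ^ (k + 1) := by
  intro x hx hxne
  have hab : a < b := by
    by_contra h
    push_neg at h
    have hx1 : x = a := le_antisymm (hx.2.trans h) hx.1
    have hx2 : x₀ = a := le_antisymm (hx₀.2.trans h) hx₀.1
    exact hxne (hx1.trans hx2.symm)
  exact key a b x₀ hab hx₀ f k hf hf0 x hx hxne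
end

section
/- Let f : [a,b] → ℝ be C^{k+1} with f(x₀) = 0 for some x₀ ∈ [a,b]. Then for all x ∈ [a,b] with x ≠ x₀, the k-th derivative of x ↦ f(x)/(x-x₀) is bounded in absolute value by the sup norm of f^{(k+1)} on [a,b]. -/
open Set Filter
open scoped Nat Topology

-- congr of set at a point
lemma aux_congr_set {f : ℝ → ℝ} {s t : Set ℝ} {x : ℝ} (h : s =ᶠ[𝓝 x] t) (n : ℕ) :
    iteratedDerivWithin n f s x = iteratedDerivWithin n f t x := by
  simp only [iteratedDerivWithin_eq_iteratedFDerivWithin, iteratedFDerivWithin_congr_set h n]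

-- iterated derivative within a smaller set agrees with bigger set
lemma aux_subset {f : ℝ → ℝ} {s t : Set ℝ} (hst : t ⊆ s)
    (hs : UniqueDiffOn ℝ s) (ht : UniqueDiffOn ℝ t) {n m : ℕ}
    (hf : ContDiffOn ℝ n f s) (hmn : m ≤ n) {x : ℝ} (hx : x ∈ t) :
    iteratedDerivWithin m f t x = iteratedDerivWithin m f s x := by
  induction m generalizing x with
  | zero => simp
  | succ m ih =>
    have hm : (m : WithTop ℕ∞) < (n : ℕ) := by exact_mod_cast Nat.lt_of_succ_le hmn
    have hdiff : DifferentiableWithinAt ℝ (iteratedDerivWithin m f s) s x :=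
      (hf.differentiableOn_iteratedDerivWithin hm hs) x (hst hx)
    rw [iteratedDerivWithin_succ,
      derivWithin_congr (fun y hy => ih (Nat.le_of_succ_le hmn) hy) (ih (Nat.le_of_succ_le hmn) hx),
      derivWithin_subset hst (ht x hx) hdiff,
      ← iteratedDerivWithin_succ]

-- mirrored Lagrange remainder: Taylor expansion centered at right endpoint
lemma aux_taylor_left {f : ℝ → ℝ} {x x₀ : ℝ} {n : ℕ} (hx : x₀ < x)
    (hf : ContDiffOn ℝ n f (Icc x₀ x))
    (hf' : DifferentiableOn ℝ (iteratedDerivWithin n f (Icc x₀ x)) (Ioo x₀ x)) :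
    ∃ x' ∈ Ioo x₀ x, f x₀ - taylorWithinEval f n (Icc x₀ x) x x₀ =
      iteratedDerivWithin (n + 1) f (Icc x₀ x) x' * (x₀ - x) ^ (n + 1) / (n + 1)! := by
  rcases exists_ratio_hasDerivAt_eq_ratio_slope
      (fun t => taylorWithinEval f n (Icc x₀ x) t x₀)
      (fun t => ((n ! : ℝ)⁻¹ * (x₀ - t) ^ n) • iteratedDerivWithin (n + 1) f (Icc x₀ x) t) hx
      (continuousOn_taylorWithinEval (uniqueDiffOn_Icc hx) hf)
      (fun y hy => taylorWithinEval_hasDerivAt_Ioo x₀ hx hy hf hf')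
      (fun t => (x₀ - t) ^ (n + 1)) (fun t => -(n + 1 : ℝ) * (x₀ - t) ^ n)
      (by fun_prop) (fun y _ => monomial_has_deriv_aux y x₀ _) with ⟨y, hy, h⟩
  use y, hy
  have hy0 : x₀ - y ≠ 0 := sub_ne_zero.mpr (ne_of_lt hy.1)
  have hyn : (x₀ - y) ^ n ≠ 0 := pow_ne_zero _ hy0
  have hfac : (n ! : ℝ) ≠ 0 := by positivity
  simp only [taylorWithinEval_self, smul_eq_mul, sub_self, zero_pow (Nat.succ_ne_zero n),
    sub_zero] at h
  rw [Nat.factorial_succ]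
  push_cast
  rw [eq_div_iff (by positivity : ((n : ℝ) + 1) * (n ! : ℝ) ≠ 0)]
  have hne : -((n : ℝ) + 1) * (x₀ - y) ^ n ≠ 0 := by
    apply mul_ne_zero _ hyn
    simp only [neg_ne_zero]
    positivity
  field_simp at h
  apply mul_right_cancel₀ hyn
  linear_combination -(x₀ - y) ^ n * h

-- the summation identity used in the inductive step
lemma aux_sum (i : ℕ) (D : ℕ → ℝ) (Z : ℝ) :
    ∑ j ∈ Finset.range (i + 1),
        ((-1 : ℝ) ^ (i + j) * (i ! / j !) * D (j + 1) * Z ^ ((j : ℤ) - i - 1)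
          + (-1 : ℝ) ^ (i + j) * (i ! / j !) * D j * (((j : ℤ) - i - 1 : ℤ) : ℝ)
              * Z ^ ((j : ℤ) - i - 1 - 1))
      = ∑ j ∈ Finset.range (i + 1 + 1),
          (-1 : ℝ) ^ (i + 1 + j) * ((i + 1)! / j !) * D j * Z ^ ((j : ℤ) - (i + 1) - 1) := by
  set A : ℕ → ℝ := fun j => (-1 : ℝ) ^ (i + j) * (i ! / j !) * D (j + 1) * Z ^ ((j : ℤ) - i - 1)
    with hA
  set B : ℕ → ℝ := fun j => (-1 : ℝ) ^ (i + j) * (i ! / j !) * D j * (((j : ℤ) - i - 1 : ℤ) : ℝ)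
      * Z ^ ((j : ℤ) - i - 1 - 1) with hB
  set T : ℕ → ℝ := fun j => (-1 : ℝ) ^ (i + 1 + j) * ((i + 1)! / j !) * D j
      * Z ^ ((j : ℤ) - (i + 1) - 1) with hT
  have key : ∀ j, T (j + 1) = A j + B (j + 1) := by
    intro j
    have hfj : (j ! : ℝ) ≠ 0 := by positivity
    have e1 : ((j : ℤ) + 1) - (i + 1) - 1 = (j : ℤ) - i - 1 := by ring
    have e2 : ((j : ℤ) + 1) - i - 1 - 1 = (j : ℤ) - i - 1 := by ring
    simp only [hA, hB, hT, Nat.cast_add, Nat.cast_one, e1, e2, Nat.factorial_succ]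
    push_cast
    field_simp
    ring
  have hB0 : B 0 = T 0 := by
    have e3 : (0 : ℤ) - i - 1 - 1 = (0 : ℤ) - (i + 1) - 1 := by ring
    simp only [hB, hT, Nat.cast_zero, Nat.cast_add, Nat.cast_one, e3, Nat.factorial_succ,
      Nat.factorial_zero]
    push_cast
    ring
  have hBtop : B (i + 1) = 0 := by
    simp only [hB]
    push_cast
    ring
  rw [Finset.sum_add_distrib, Finset.sum_range_succ' T (i + 1), Finset.sum_range_succ' B i]
  calc (∑ j ∈ Finset.range (i + 1), A j) + ((∑ j ∈ Finset.range i, B (j + 1)) + B 0)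
      = (∑ j ∈ Finset.range (i + 1), (A j + B (j + 1)) - B (i + 1)) + T 0 := by
        rw [Finset.sum_add_distrib, Finset.sum_range_succ (fun j => B (j + 1)) i, hB0]; ring
    _ = (∑ j ∈ Finset.range (i + 1), T (j + 1)) + T 0 := by
        rw [hBtop, sub_zero]
        congr 1
        exact Finset.sum_congr rfl fun j _ => (key j).symm

lemma aux_formula {a b x₀ : ℝ} (hab : a < b) {k : ℕ} {f : ℝ → ℝ}
    (hf : ContDiffOn ℝ (k + 1) f (Icc a b)) :
    ∀ i : ℕ, i ≤ k → ∀ x ∈ Icc a b, x ≠ x₀ →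
      iteratedDerivWithin i (fun y => f y / (y - x₀)) (Icc a b) x
        = ∑ j ∈ Finset.range (i + 1), (-1 : ℝ) ^ (i + j) * (i ! / j !)
            * iteratedDerivWithin j f (Icc a b) x * (x - x₀) ^ ((j : ℤ) - i - 1) := by
  have hu : UniqueDiffOn ℝ (Icc a b) := uniqueDiffOn_Icc hab
  intro i
  induction i with
  | zero =>
    intro _ x hx hxne
    simp [Finset.sum_range_one, zpow_neg, zpow_one, div_eq_mul_inv]
  | succ i ih =>
    intro hik x hx hxne
    have hik' : i ≤ k := Nat.le_of_succ_le hik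
    have h0 : x - x₀ ≠ 0 := sub_ne_zero.mpr hxne
    -- the i-th derivative agrees with the sum formula near x (within the set)
    have hev : iteratedDerivWithin i (fun y => f y / (y - x₀)) (Icc a b)
        =ᶠ[𝓝[Icc a b] x] fun y => ∑ j ∈ Finset.range (i + 1), (-1 : ℝ) ^ (i + j) * (i ! / j !)
            * iteratedDerivWithin j f (Icc a b) y * (y - x₀) ^ ((j : ℤ) - i - 1) := by
      filter_upwards [self_mem_nhdsWithin,
        mem_nhdsWithin_of_mem_nhds (compl_singleton_mem_nhds hxne)] with y hy hy'
      exact ih hik' y hy hy'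
    -- derivative of each summand
    have hterm : ∀ j ∈ Finset.range (i + 1), HasDerivWithinAt
        (fun y => (-1 : ℝ) ^ (i + j) * (i ! / j !)
            * iteratedDerivWithin j f (Icc a b) y * (y - x₀) ^ ((j : ℤ) - i - 1))
        ((-1 : ℝ) ^ (i + j) * (i ! / j !) * iteratedDerivWithin (j + 1) f (Icc a b) x
            * (x - x₀) ^ ((j : ℤ) - i - 1)
          + (-1 : ℝ) ^ (i + j) * (i ! / j !) * iteratedDerivWithin j f (Icc a b) x
            * (((j : ℤ) - i - 1 : ℤ) : ℝ) * (x - x₀) ^ ((j : ℤ) - i - 1 - 1))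
        (Icc a b) x := by
      intro j hj
      have hjk : (j : WithTop ℕ∞) < ((k + 1 : ℕ) : WithTop ℕ∞) := by
        exact_mod_cast Nat.lt_succ_of_le ((Nat.lt_succ_iff.mp (Finset.mem_range.mp hj)).trans hik')
      have hdiff : DifferentiableWithinAt ℝ (iteratedDerivWithin j f (Icc a b)) (Icc a b) x :=
        (hf.differentiableOn_iteratedDerivWithin hjk hu) x hx
      have hDj : HasDerivWithinAt (iteratedDerivWithin j f (Icc a b))
          (iteratedDerivWithin (j + 1) f (Icc a b) x) (Icc a b) x := by
        have h := hdiff.hasDerivWithinAt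
        rwa [← iteratedDerivWithin_succ] at h
      have hzp : HasDerivWithinAt (fun y => (y - x₀) ^ ((j : ℤ) - i - 1))
          ((((j : ℤ) - i - 1 : ℤ) : ℝ) * (x - x₀) ^ ((j : ℤ) - i - 1 - 1)) (Icc a b) x := by
        have h1 := hasDerivAt_zpow ((j : ℤ) - i - 1) (x - x₀) (Or.inl h0)
        have h2 := h1.comp x ((hasDerivAt_id x).sub_const x₀)
        simpa [Function.comp_def] using h2.hasDerivWithinAt
      have h3 := (hDj.const_mul ((-1 : ℝ) ^ (i + j) * (i ! / j !))).fun_mul hzp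
      exact h3.congr_deriv (by ring)
    have Hsum := HasDerivWithinAt.fun_sum hterm
    calc iteratedDerivWithin (i + 1) (fun y => f y / (y - x₀)) (Icc a b) x
        = derivWithin (iteratedDerivWithin i (fun y => f y / (y - x₀)) (Icc a b)) (Icc a b) x :=
          by rw [iteratedDerivWithin_succ]
      _ = derivWithin (fun y => ∑ j ∈ Finset.range (i + 1), (-1 : ℝ) ^ (i + j) * (i ! / j !)
            * iteratedDerivWithin j f (Icc a b) y * (y - x₀) ^ ((j : ℤ) - i - 1)) (Icc a b) x :=
          hev.derivWithin_eq (ih hik' x hx hxne)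
      _ = _ := Hsum.derivWithin (hu x hx)
      _ = _ := aux_sum i (fun j => iteratedDerivWithin j f (Icc a b) x) (x - x₀)

theorem stmt_1 (a b x₀ : ℝ) (k : ℕ) (f : ℝ → ℝ)
    (hx₀ : x₀ ∈ Icc a b)
    (hf : ContDiffOn ℝ (k + 1) f (Icc a b))
    (hf0 : f x₀ = 0) :
    ∀ x ∈ Icc a b, x ≠ x₀ →
      |iteratedDerivWithin k (fun y => f y / (y - x₀)) (Icc a b) x|
        ≤ sSup ((fun t => |iteratedDerivWithin (k + 1) f (Icc a b) t|) '' Icc a b) := by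
  intro x hx hxne
  have hab : a < b := by
    rcases eq_or_lt_of_le (hx.1.trans hx.2) with h | h
    · exact absurd (show x = x₀ by subst h; linarith [hx.1, hx.2, hx₀.1, hx₀.2]) hxne
    · exact h
  have hu : UniqueDiffOn ℝ (Icc a b) := uniqueDiffOn_Icc hab
  have h0 : x - x₀ ≠ 0 := sub_ne_zero.mpr hxne
  have hfn : ContDiffOn ℝ ((k + 1 : ℕ) : WithTop ℕ∞) f (Icc a b) := by exact_mod_cast hf
  set M := sSup ((fun t => |iteratedDerivWithin (k + 1) f (Icc a b) t|) '' Icc a b) with hM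
  have hbdd : BddAbove ((fun t => |iteratedDerivWithin (k + 1) f (Icc a b) t|) '' Icc a b) :=
    (isCompact_Icc.image_of_continuousOn
      ((hfn.continuousOn_iteratedDerivWithin (le_refl _) hu).abs)).bddAbove
  have hMle : ∀ t ∈ Icc a b, |iteratedDerivWithin (k + 1) f (Icc a b) t| ≤ M :=
    fun t ht => le_csSup hbdd (mem_image_of_mem _ ht)
  have hM0 : 0 ≤ M := le_trans (abs_nonneg _) (hMle x hx)
  -- Taylor remainder at center x evaluated at x₀, over a suitable subinterval
  have main : ∃ c d, c < d ∧ Icc c d ⊆ Icc a b ∧ x ∈ Icc c d ∧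
      ∃ ξ ∈ Ioo c d, f x₀ - taylorWithinEval f k (Icc c d) x x₀ =
        iteratedDerivWithin (k + 1) f (Icc c d) ξ * (x₀ - x) ^ (k + 1) / ((k + 1)! : ℝ) := by
    rcases hxne.lt_or_gt with hlt | hgt
    · refine ⟨x, x₀, hlt, Icc_subset_Icc hx.1 hx₀.2, left_mem_Icc.mpr hlt.le, ?_⟩
      have hsub : Icc x x₀ ⊆ Icc a b := Icc_subset_Icc hx.1 hx₀.2
      have hfI : ContDiffOn ℝ k f (Icc x x₀) :=
        (hf.mono hsub).of_le (by exact_mod_cast Nat.le_succ k)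
      have hf' : DifferentiableOn ℝ (iteratedDerivWithin k f (Icc x x₀)) (Ioo x x₀) :=
        ((hfn.mono hsub).differentiableOn_iteratedDerivWithin
          (by exact_mod_cast Nat.lt_succ_self k) (uniqueDiffOn_Icc hlt)).mono Ioo_subset_Icc_self
      have h := taylor_mean_remainder_lagrange hlt.ne (by rwa [uIcc_of_le hlt.le])
        (by rwa [uIcc_of_le hlt.le, uIoo_of_lt hlt])
      rwa [uIcc_of_le hlt.le, uIoo_of_lt hlt] at h
    · refine ⟨x₀, x, hgt, Icc_subset_Icc hx₀.1 hx.2, right_mem_Icc.mpr hgt.le, ?_⟩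
      have hsub : Icc x₀ x ⊆ Icc a b := Icc_subset_Icc hx₀.1 hx.2
      have hfI : ContDiffOn ℝ k f (Icc x₀ x) :=
        (hf.mono hsub).of_le (by exact_mod_cast Nat.le_succ k)
      have hf' : DifferentiableOn ℝ (iteratedDerivWithin k f (Icc x₀ x)) (Ioo x₀ x) :=
        ((hfn.mono hsub).differentiableOn_iteratedDerivWithin
          (by exact_mod_cast Nat.lt_succ_self k) (uniqueDiffOn_Icc hgt)).mono Ioo_subset_Icc_self
      exact aux_taylor_left hgt hfI hf'
  obtain ⟨c, d, hcd, hIsub, hxI, ξ, hξ, hrem⟩ := main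
  have hIoo : Ioo c d ⊆ Icc a b := fun y hy => hIsub (Ioo_subset_Icc_self hy)
  have hξab : ξ ∈ Icc a b := hIoo hξ
  have hcongr : iteratedDerivWithin (k + 1) f (Icc c d) ξ
      = iteratedDerivWithin (k + 1) f (Icc a b) ξ := by
    apply aux_congr_set
    apply Filter.eventuallyEq_set.mpr
    filter_upwards [isOpen_Ioo.mem_nhds hξ] with y hy
    exact iff_of_true (Ioo_subset_Icc_self hy) (hIoo hy)
  have hTT : taylorWithinEval f k (Icc c d) x x₀
      = ∑ j ∈ Finset.range (k + 1),
          ((j ! : ℝ)⁻¹ * (x₀ - x) ^ j) * iteratedDerivWithin j f (Icc a b) x := by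
    rw [taylor_within_apply]
    refine Finset.sum_congr rfl fun j hj => ?_
    rw [smul_eq_mul, aux_subset hIsub hu (uniqueDiffOn_Icc hcd) hfn
      ((Nat.lt_succ_iff.mp (Finset.mem_range.mp hj)).trans (Nat.le_succ k)) hxI]
  have hform := aux_formula hab hf k le_rfl x hx hxne
  have hfact : iteratedDerivWithin k (fun y => f y / (y - x₀)) (Icc a b) x
      = (-1 : ℝ) ^ k * k ! * (x - x₀) ^ (-(k : ℤ) - 1) * ∑ j ∈ Finset.range (k + 1),
          ((j ! : ℝ)⁻¹ * (x₀ - x) ^ j) * iteratedDerivWithin j f (Icc a b) x := by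
    rw [hform, Finset.mul_sum]
    refine Finset.sum_congr rfl fun j hj => ?_
    have hfj : (j ! : ℝ) ≠ 0 := by positivity
    have hz : (x - x₀) ^ ((j : ℤ) - k - 1)
        = (x - x₀) ^ (j : ℕ) * (x - x₀) ^ (-(k : ℤ) - 1) := by
      rw [← zpow_natCast (x - x₀) j, ← zpow_add₀ h0]
      congr 1
      ring
    rw [hz]
    field_simp
    rw [show (x₀ - x : ℝ) = (-1 : ℝ) * (x - x₀) by ring, mul_pow, pow_add]
    ring
  have hTval : taylorWithinEval f k (Icc c d) x x₀
      = -(iteratedDerivWithin (k + 1) f (Icc a b) ξ * (x₀ - x) ^ (k + 1) / ((k + 1)! : ℝ)) := by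
    rw [← hcongr]
    rw [hf0] at hrem
    linarith
  rw [hfact, ← hTT, hTval]
  set c' := iteratedDerivWithin (k + 1) f (Icc a b) ξ with hc'
  have hzz : (x - x₀) ^ (-(k : ℤ) - 1) * (x - x₀) ^ (k + 1 : ℕ) = 1 := by
    have he : (-(k : ℤ) - 1 + (k + 1 : ℕ)) = 0 := by push_cast; ring
    rw [← zpow_natCast (x - x₀) (k + 1), ← zpow_add₀ h0, he, zpow_zero]
  have hkf : ((k + 1)! : ℝ) = ((k : ℝ) + 1) * (k ! : ℝ) := by
    rw [Nat.factorial_succ]; push_cast; ring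
  have hval : (-1 : ℝ) ^ k * k ! * (x - x₀) ^ (-(k : ℤ) - 1)
      * -(c' * (x₀ - x) ^ (k + 1) / ((k + 1)! : ℝ)) = c' / ((k : ℝ) + 1) := by
    have hs : (-1 : ℝ) ^ (k + (k + 1)) = -1 := Odd.neg_one_pow ⟨k, by ring⟩
    have hfk : (k ! : ℝ) ≠ 0 := by positivity
    calc (-1 : ℝ) ^ k * k ! * (x - x₀) ^ (-(k : ℤ) - 1)
        * -(c' * (x₀ - x) ^ (k + 1) / ((k + 1)! : ℝ))
        = (k ! : ℝ) * ((x - x₀) ^ (-(k : ℤ) - 1) * (x - x₀) ^ (k + 1 : ℕ)) * c'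
            * ((-1 : ℝ) ^ (k + (k + 1)) * -1) / ((k + 1)! : ℝ) := by
          rw [show x₀ - x = (-1 : ℝ) * (x - x₀) by ring, mul_pow, pow_add]
          ring
      _ = c' / ((k : ℝ) + 1) := by
          rw [hzz, hs, hkf]
          field_simp
  rw [hval, abs_div, abs_of_pos (by positivity : (0 : ℝ) < (k : ℝ) + 1)]
  have h1k : (1 : ℝ) ≤ (k : ℝ) + 1 := by
    have := Nat.cast_nonneg (α := ℝ) k; linarith
  exact le_trans (div_le_self (abs_nonneg _) h1k) (hMle ξ hξab)
end

section
/- Let ℓ₁, …, ℓₙ be positive reals incommensurable over {−1,0,1}, let L = Σℓⱼ, and let T = {|ℓ·ζ| : ζ ∈ {1}×{±1}^{n−1}}. Then max T = L, and if ℓ'₁ denotes the smallest of the ℓⱼ, then max(T \ {L}) = L − 2ℓ'₁; equivalently ℓ'₁ = (L − max(T \ {L}))/2. -/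
open Finset

/-- `ℓ₁,…,ℓₙ` incommensurable over `{-1,0,1}`. -/
def Incommensurable {n : ℕ} (ℓ : Fin n → ℝ) : Prop :=
  ∀ ζ : Fin n → ℝ, (∀ j, ζ j = -1 ∨ ζ j = 0 ∨ ζ j = 1) →
    (∑ j, ζ j * ℓ j) = 0 → ζ = 0

theorem stmt_12 (n : ℕ) (hn : 2 ≤ n) (ℓ : Fin n → ℝ)
    (hpos : ∀ j, 0 < ℓ j) (hinc : Incommensurable ℓ)
    (L : ℝ) (hL : L = ∑ j, ℓ j)
    (T : Set ℝ)
    (hT : T = {t : ℝ | ∃ ζ : Fin n → ℝ,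
      (∀ j, ζ j = 1 ∨ ζ j = -1) ∧ ζ ⟨0, by omega⟩ = 1 ∧ t = |∑ j, ζ j * ℓ j|})
    (j₀ : Fin n) (hj₀ : ∀ j, ℓ j₀ ≤ ℓ j) :
    (L ∈ T ∧ ∀ t ∈ T, t ≤ L) ∧
    ((L - 2 * ℓ j₀) ∈ T \ {L} ∧ ∀ t ∈ T \ {L}, t ≤ L - 2 * ℓ j₀) := by
  have h0n : 0 < n := by omega
  set i0 : Fin n := ⟨0, by omega⟩ with hi0
  subst hL hT
  set L := ∑ j, ℓ j with hL
  have hL0 : (0:ℝ) ≤ L := Finset.sum_nonneg fun j _ => (hpos j).le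
  -- key upper bound: if some coordinate is -1 then the sum is ≤ L - 2 ℓ j₀
  have lemA : ∀ ζ : Fin n → ℝ, (∀ j, ζ j = 1 ∨ ζ j = -1) → ∀ k, ζ k = -1 →
      ∑ j, ζ j * ℓ j ≤ L - 2 * ℓ j₀ := by
    intro ζ hζ k hk
    have h1 : ∑ j ∈ univ.erase k, ζ j * ℓ j + ζ k * ℓ k = ∑ j, ζ j * ℓ j :=
      Finset.sum_erase_add _ _ (mem_univ k)
    have h2 : ∑ j ∈ univ.erase k, ζ j * ℓ j ≤ ∑ j ∈ univ.erase k, ℓ j := by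
      apply Finset.sum_le_sum
      intro j _
      rcases hζ j with h | h <;> nlinarith [hpos j]
    have h3 : ∑ j ∈ univ.erase k, ℓ j = L - ℓ k :=
      Finset.sum_erase_eq_sub (mem_univ k)
    have h4 : ℓ j₀ ≤ ℓ k := hj₀ k
    rw [hk] at h1
    linarith
  -- membership lemma: any ±1 vector gives an element of T
  have lemB : ∀ ζ : Fin n → ℝ, (∀ j, ζ j = 1 ∨ ζ j = -1) →
      |∑ j, ζ j * ℓ j| ∈ {t : ℝ | ∃ ζ : Fin n → ℝ,
        (∀ j, ζ j = 1 ∨ ζ j = -1) ∧ ζ i0 = 1 ∧ t = |∑ j, ζ j * ℓ j|} := by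
    intro ζ hζ
    rcases hζ i0 with h | h
    · exact ⟨ζ, hζ, h, rfl⟩
    · refine ⟨fun j => -(ζ j), fun j => ?_, by show -ζ i0 = 1; rw [h]; norm_num, ?_⟩
      · rcases hζ j with h' | h' <;> simp [h']
      · have : ∑ j, -(ζ j) * ℓ j = -∑ j, ζ j * ℓ j := by
          rw [← Finset.sum_neg_distrib]; exact Finset.sum_congr rfl (by intros; ring)
        rw [this, abs_neg]
  have hone : ∀ j : Fin n, (fun _ : Fin n => (1:ℝ)) j = 1 ∨ (fun _ : Fin n => (1:ℝ)) j = -1 :=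
    fun _ => Or.inl rfl
  -- 2 * ℓ j₀ ≤ L
  have h2L : 2 * ℓ j₀ ≤ L := by
    obtain ⟨i, hi⟩ : (univ.erase j₀).Nonempty := by
      rw [← Finset.card_pos, Finset.card_erase_of_mem (mem_univ j₀), Finset.card_univ,
        Fintype.card_fin]
      omega
    have h1 : ℓ i ≤ ∑ j ∈ univ.erase j₀, ℓ j :=
      Finset.single_le_sum (fun j _ => (hpos j).le) hi
    have h3 : ∑ j ∈ univ.erase j₀, ℓ j = L - ℓ j₀ :=
      Finset.sum_erase_eq_sub (mem_univ j₀)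
    have h4 := hj₀ i
    nlinarith
  constructor
  · constructor
    · exact ⟨fun _ => 1, hone, rfl, by simp only [one_mul]; exact (abs_of_nonneg hL0).symm⟩
    · rintro t ⟨ζ, hζ, -, rfl⟩
      calc |∑ j, ζ j * ℓ j| ≤ ∑ j, |ζ j * ℓ j| := Finset.abs_sum_le_sum_abs _ _
        _ = L := Finset.sum_congr rfl fun j _ => by
            rcases hζ j with h | h <;>
              simp [h, abs_of_nonneg (hpos j).le]
  · constructor
    · -- membership of L - 2 ℓ j₀
      have hζ' : ∀ j : Fin n, (if j = j₀ then (-1:ℝ) else 1) = 1 ∨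
          (if j = j₀ then (-1:ℝ) else 1) = -1 := by
        intro j; by_cases h : j = j₀ <;> simp [h]
      have hsum : ∑ j, (if j = j₀ then (-1:ℝ) else 1) * ℓ j = L - 2 * ℓ j₀ := by
        have h1 : ∑ j ∈ univ.erase j₀, (if j = j₀ then (-1:ℝ) else 1) * ℓ j
            + (if j₀ = j₀ then (-1:ℝ) else 1) * ℓ j₀ = ∑ j, (if j = j₀ then (-1:ℝ) else 1) * ℓ j :=
          Finset.sum_erase_add _ _ (mem_univ j₀)
        have h2 : ∑ j ∈ univ.erase j₀, (if j = j₀ then (-1:ℝ) else 1) * ℓ j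
            = ∑ j ∈ univ.erase j₀, ℓ j := by
          apply Finset.sum_congr rfl
          intro j hj
          simp [Finset.ne_of_mem_erase hj]
        have h3 : ∑ j ∈ univ.erase j₀, ℓ j = L - ℓ j₀ :=
          Finset.sum_erase_eq_sub (mem_univ j₀)
        rw [h2, h3] at h1
        rw [← h1]; simp; ring
      constructor
      · have := lemB (fun j => if j = j₀ then (-1:ℝ) else 1) hζ'
        rw [hsum, abs_of_nonneg (by linarith)] at this
        exact this
      · simp only [Set.mem_singleton_iff]
        have := hpos j₀
        intro h; linarith
    · rintro t ⟨⟨ζ, hζ, hζ0, rfl⟩, ht⟩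
      simp only [Set.mem_singleton_iff] at ht
      obtain ⟨k, hk⟩ : ∃ k, ζ k = -1 := by
        by_contra hcon
        push_neg at hcon
        have : ∀ j, ζ j = 1 := fun j => (hζ j).resolve_right (hcon j)
        apply ht
        rw [show ∑ j, ζ j * ℓ j = L from Finset.sum_congr rfl fun j _ => by rw [this j, one_mul],
          abs_of_nonneg hL0]
      rw [abs_le']
      refine ⟨lemA ζ hζ k hk, ?_⟩
      have hneg : ∑ j, -(ζ j) * ℓ j = -∑ j, ζ j * ℓ j := by
        rw [← Finset.sum_neg_distrib]; exact Finset.sum_congr rfl (by intros; ring)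
      have := lemA (fun j => -(ζ j)) (fun j => by rcases hζ j with h | h <;> simp [h])
        i0 (by show -ζ i0 = -1; rw [hζ0])
      simp only [hneg] at this
      linarith
end

section
/- There exist two non-congruent Euclidean triangles with perimeter 1, both with all angles of the form π/(odd integer) or complementary, having equal characteristic functions: namely, triangles with angles (π/7, π/63, 53π/63) and (π/9, π/21, 53π/63) satisfy (−1)^{i₁+i₂}(i₁+i₂+1)/(4i₁i₂−1) = (−1)^{ĩ₁+ĩ₂}(ĩ₁+ĩ₂+1)/(4ĩ₁ĩ₂−1) with (i₁,i₂,ĩ₁,ĩ₂) = (3,31,4,10). -/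
/-- Two non-congruent triangles with perimeter 1, angles `(π/7, π/63, 53π/63)` and
`(π/9, π/21, 53π/63)` (coming from `(i₁,i₂,j₁,j₂) = (3,31,4,10)`), have equal characteristic
functions since the arithmetic identity
`(−1)^{i₁+i₂}(i₁+i₂+1)/(4i₁i₂−1) = (−1)^{j₁+j₂}(j₁+j₂+1)/(4j₁j₂−1)` holds. -/
theorem stmt_14 :
    ∃ i₁ i₂ j₁ j₂ : ℕ, (i₁, i₂, j₁, j₂) = (3, 31, 4, 10) ∧
    -- the triangles are not congruent: the angle triples differ
    ({Real.pi / (2 * i₁ + 1), Real.pi / (2 * i₂ + 1),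
        Real.pi - Real.pi / (2 * i₁ + 1) - Real.pi / (2 * i₂ + 1)} : Set ℝ)
      ≠ ({Real.pi / (2 * j₁ + 1), Real.pi / (2 * j₂ + 1),
        Real.pi - Real.pi / (2 * j₁ + 1) - Real.pi / (2 * j₂ + 1)} : Set ℝ) ∧
    -- the arithmetic identity making the characteristic functions equal
    ((-1 : ℝ) ^ (i₁ + i₂) * ((i₁ + i₂ + 1 : ℕ) : ℝ) / ((4 * i₁ * i₂ - 1 : ℕ) : ℝ)
      = (-1 : ℝ) ^ (j₁ + j₂) * ((j₁ + j₂ + 1 : ℕ) : ℝ) / ((4 * j₁ * j₂ - 1 : ℕ) : ℝ)) ∧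
    -- hence the characteristic polynomials coincide
    (∀ σ : ℝ,
      Real.cos σ + (-1 : ℝ) ^ (i₁ + i₂)
          * Real.sin (2 * Real.pi * ((i₁ + i₂ + 1 : ℕ) : ℝ) / ((4 * i₁ * i₂ - 1 : ℕ) : ℝ))
        = Real.cos σ + (-1 : ℝ) ^ (j₁ + j₂)
          * Real.sin (2 * Real.pi * ((j₁ + j₂ + 1 : ℕ) : ℝ) / ((4 * j₁ * j₂ - 1 : ℕ) : ℝ))) := by

  refine ⟨3, 31, 4, 10, rfl, ?_, ?_, ?_⟩
  · have hpi := Real.pi_pos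
    intro h
    have h1 : Real.pi / (2 * (3:ℕ) + 1) ∈
        ({Real.pi / (2 * (4:ℕ) + 1), Real.pi / (2 * (10:ℕ) + 1),
          Real.pi - Real.pi / (2 * (4:ℕ) + 1) - Real.pi / (2 * (10:ℕ) + 1)} : Set ℝ) := by
      rw [← h]; left; rfl
    simp only [Set.mem_insert_iff, Set.mem_singleton_iff] at h1
    push_cast at h1
    rcases h1 with h1 | h1 | h1 <;> nlinarith [h1]
  · norm_num
  · intro σ
    have : ((3 + 31 + 1 : ℕ) : ℝ) / ((4 * 3 * 31 - 1 : ℕ) : ℝ)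
        = ((4 + 10 + 1 : ℕ) : ℝ) / ((4 * 4 * 10 - 1 : ℕ) : ℝ) := by norm_num
    have h2 : (2 * Real.pi * ((3 + 31 + 1 : ℕ) : ℝ) / ((4 * 3 * 31 - 1 : ℕ) : ℝ))
        = (2 * Real.pi * ((4 + 10 + 1 : ℕ) : ℝ) / ((4 * 4 * 10 - 1 : ℕ) : ℝ)) := by
      norm_num; ring
    norm_num [h2] at *
    norm_num [h2]
end
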